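/- Let T = (0,0,0,0,0,c₆,f₁,f₂,f₃,f₄,t₁,t₂) and T′ = (0,0,0,0,0,c₆,f₁′,f₂′,f₃′,f₄′,t₁′,t₂′) be tuples in ℤ¹² with c₁ = … = c₅ = 0 and the same value c₆ ≠ 0. Then T and T′ are ψ-equivalent if and only if: f₁ ≡ f₁′ (mod c₆); f₂ ≡ f₂′ (mod c₆); f₃ = f₃′; f₄ = f₄′; t₁ ≡ t₁′ (mod gcd(c₆,f₁,f₂,f₃,f₄)); and f₁f₂ + c₆t₂ ≡ f₁′f₂′ + c₆t₂′ (mod c₆·gcd(f₃,f₄)), where in the last congruence gcd(0,0) = 0 so that the congruence modulo 0 means equality. -/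

import Mathlib

/-- A 12-tuple of integers, with coordinates written `(c₁,…,c₆,f₁,…,f₄,t₁,t₂)`. -/
structure Tuple : Type where
  c1 : ℤ
  c2 : ℤ
  c3 : ℤ
  c4 : ℤ
  c5 : ℤ
  c6 : ℤ
  f1 : ℤ
  f2 : ℤ
  f3 : ℤ
  f4 : ℤ
  t1 : ℤ
  t2 : ℤ

/-- The move ψ₂₁ : f₃↦f₃+c₅, f₄↦f₄−c₁, t₁↦t₁+f₁. -/
def psi21 : Equiv.Perm Tuple where
  toFun x := { x with f3 := x.f3 + x.c5, f4 := x.f4 - x.c1, t1 := x.t1 + x.f1 }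
  invFun x := { x with f3 := x.f3 - x.c5, f4 := x.f4 + x.c1, t1 := x.t1 - x.f1 }
  left_inv x := by cases x; simp
  right_inv x := by cases x; simp

/-- The move ψ₄₁ : f₂↦f₂+c₆, f₃↦f₃−c₅, t₂↦t₂−f₁. -/
def psi41 : Equiv.Perm Tuple where
  toFun x := { x with f2 := x.f2 + x.c6, f3 := x.f3 - x.c5, t2 := x.t2 - x.f1 }
  invFun x := { x with f2 := x.f2 - x.c6, f3 := x.f3 + x.c5, t2 := x.t2 + x.f1 }
  left_inv x := by cases x; simp
  right_inv x := by cases x; simp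

/-- The move ψ₁₂ : f₃↦f₃−c₄, f₄↦f₄+c₂, t₁↦t₁+f₂. -/
def psi12 : Equiv.Perm Tuple where
  toFun x := { x with f3 := x.f3 - x.c4, f4 := x.f4 + x.c2, t1 := x.t1 + x.f2 }
  invFun x := { x with f3 := x.f3 + x.c4, f4 := x.f4 - x.c2, t1 := x.t1 - x.f2 }
  left_inv x := by cases x; simp
  right_inv x := by cases x; simp

/-- The move ψ₃₂ : f₁↦f₁+c₆, f₄↦f₄−c₂, t₂↦t₂−f₂. -/
def psi32 : Equiv.Perm Tuple where
  toFun x := { x with f1 := x.f1 + x.c6, f4 := x.f4 - x.c2, t2 := x.t2 - x.f2 }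
  invFun x := { x with f1 := x.f1 - x.c6, f4 := x.f4 + x.c2, t2 := x.t2 + x.f2 }
  left_inv x := by cases x; simp
  right_inv x := by cases x; simp

/-- The move ψ₄₃ : f₁↦f₁+c₅, f₂↦f₂−c₄, t₁↦t₁+f₃. -/
def psi43 : Equiv.Perm Tuple where
  toFun x := { x with f1 := x.f1 + x.c5, f2 := x.f2 - x.c4, t1 := x.t1 + x.f3 }
  invFun x := { x with f1 := x.f1 - x.c5, f2 := x.f2 + x.c4, t1 := x.t1 - x.f3 }
  left_inv x := by cases x; simp
  right_inv x := by cases x; simp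

/-- The move ψ₂₃ : f₁↦f₁−c₅, f₄↦f₄+c₃, t₂↦t₂−f₃. -/
def psi23 : Equiv.Perm Tuple where
  toFun x := { x with f1 := x.f1 - x.c5, f4 := x.f4 + x.c3, t2 := x.t2 - x.f3 }
  invFun x := { x with f1 := x.f1 + x.c5, f4 := x.f4 - x.c3, t2 := x.t2 + x.f3 }
  left_inv x := by cases x; simp
  right_inv x := by cases x; simp

/-- The move ψ₃₄ : f₁↦f₁−c₁, f₂↦f₂+c₂, t₁↦t₁+f₄. -/
def psi34 : Equiv.Perm Tuple where
  toFun x := { x with f1 := x.f1 - x.c1, f2 := x.f2 + x.c2, t1 := x.t1 + x.f4 }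
  invFun x := { x with f1 := x.f1 + x.c1, f2 := x.f2 - x.c2, t1 := x.t1 - x.f4 }
  left_inv x := by cases x; simp
  right_inv x := by cases x; simp

/-- The move ψ₁₄ : f₂↦f₂−c₂, f₃↦f₃+c₃, t₂↦t₂−f₄. -/
def psi14 : Equiv.Perm Tuple where
  toFun x := { x with f2 := x.f2 - x.c2, f3 := x.f3 + x.c3, t2 := x.t2 - x.f4 }
  invFun x := { x with f2 := x.f2 + x.c2, f3 := x.f3 - x.c3, t2 := x.t2 + x.f4 }
  left_inv x := by cases x; simp
  right_inv x := by cases x; simp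

/-- The list of the eight ψ-moves. -/
def psiMoves : List (Equiv.Perm Tuple) :=
  [psi21, psi41, psi12, psi32, psi43, psi23, psi34, psi14]

/-- Two tuples are ψ-equivalent if one is obtained from the other by a finite
composition of the eight ψ-moves and their inverses, i.e. they are related by the
equivalence relation generated by single applications of the moves. -/
def PsiEquiv : Tuple → Tuple → Prop :=
  Relation.EqvGen (fun x y => ∃ g ∈ psiMoves, g x = y)


/-! ### Auxiliary machinery -/

section Aux

lemma gcd_combo (a b c : ℤ) (h : (Int.gcd a b : ℤ) ∣ c) : ∃ x y : ℤ, c = a*x + b*y := by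
  obtain ⟨k, hk⟩ := h
  exact ⟨Int.gcdA a b * k, Int.gcdB a b * k, by rw [hk, Int.gcd_eq_gcd_ab a b]; ring⟩

def BigGcd (c6 f1 f2 f3 f4 : ℤ) : ℤ :=
  (Int.gcd c6 (Int.gcd f1 (Int.gcd f2 (Int.gcd f3 f4))) : ℤ)

lemma bg_dvd_c6 (c6 f1 f2 f3 f4 : ℤ) : BigGcd c6 f1 f2 f3 f4 ∣ c6 := Int.gcd_dvd_left _ _
lemma bg_dvd_f1 (c6 f1 f2 f3 f4 : ℤ) : BigGcd c6 f1 f2 f3 f4 ∣ f1 :=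
  dvd_trans (Int.gcd_dvd_right _ _) (Int.gcd_dvd_left _ _)
lemma bg_dvd_f2 (c6 f1 f2 f3 f4 : ℤ) : BigGcd c6 f1 f2 f3 f4 ∣ f2 :=
  dvd_trans (dvd_trans (Int.gcd_dvd_right _ _) (Int.gcd_dvd_right _ _)) (Int.gcd_dvd_left _ _)
lemma bg_dvd_f3 (c6 f1 f2 f3 f4 : ℤ) : BigGcd c6 f1 f2 f3 f4 ∣ f3 :=
  dvd_trans (dvd_trans (Int.gcd_dvd_right _ _) (dvd_trans (Int.gcd_dvd_right _ _) (Int.gcd_dvd_right _ _)))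
    (Int.gcd_dvd_left _ _)
lemma bg_dvd_f4 (c6 f1 f2 f3 f4 : ℤ) : BigGcd c6 f1 f2 f3 f4 ∣ f4 :=
  dvd_trans (dvd_trans (Int.gcd_dvd_right _ _) (dvd_trans (Int.gcd_dvd_right _ _) (Int.gcd_dvd_right _ _)))
    (Int.gcd_dvd_right _ _)
lemma dvd_bigGcd {c6 f1 f2 f3 f4 k : ℤ} (h1 : k ∣ c6) (h2 : k ∣ f1) (h3 : k ∣ f2)
    (h4 : k ∣ f3) (h5 : k ∣ f4) : k ∣ BigGcd c6 f1 f2 f3 f4 :=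
  Int.dvd_coe_gcd h1 (Int.dvd_coe_gcd h2 (Int.dvd_coe_gcd h3 (Int.dvd_coe_gcd h4 h5)))

lemma bigGcd_nonneg (c6 f1 f2 f3 f4 : ℤ) : 0 ≤ BigGcd c6 f1 f2 f3 f4 := Int.natCast_nonneg _

lemma bigGcd_congr {c6 f1 f2 f3 f4 f1' f2' : ℤ} (h1 : c6 ∣ f1 - f1') (h2 : c6 ∣ f2 - f2') :
    BigGcd c6 f1 f2 f3 f4 = BigGcd c6 f1' f2' f3 f4 := by
  have dir : ∀ a a' b b' : ℤ, c6 ∣ a - a' → c6 ∣ b - b' →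
      BigGcd c6 a b f3 f4 ∣ BigGcd c6 a' b' f3 f4 := by
    intro a a' b b' ha hb
    refine dvd_bigGcd (bg_dvd_c6 _ _ _ _ _) ?_ ?_ (bg_dvd_f3 _ _ _ _ _) (bg_dvd_f4 _ _ _ _ _)
    · have h := dvd_sub (bg_dvd_f1 c6 a b f3 f4) (dvd_trans (bg_dvd_c6 c6 a b f3 f4) ha)
      simpa using h
    · have h := dvd_sub (bg_dvd_f2 c6 a b f3 f4) (dvd_trans (bg_dvd_c6 c6 a b f3 f4) hb)
      simpa using h
  exact Int.dvd_antisymm (bigGcd_nonneg _ _ _ _ _) (bigGcd_nonneg _ _ _ _ _)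
    (dir f1 f1' f2 f2' h1 h2)
    (dir f1' f1 f2' f2 (by simpa using h1.neg_right) (by simpa using h2.neg_right))

/-- The invariant preserved by all ψ-moves. -/
def Good (x y : Tuple) : Prop :=
  x.c1 = y.c1 ∧ x.c2 = y.c2 ∧ x.c3 = y.c3 ∧ x.c4 = y.c4 ∧ x.c5 = y.c5 ∧ x.c6 = y.c6 ∧
  (x.c1 = 0 ∧ x.c2 = 0 ∧ x.c3 = 0 ∧ x.c4 = 0 ∧ x.c5 = 0 →
    (x.c6 ∣ x.f1 - y.f1 ∧ x.c6 ∣ x.f2 - y.f2 ∧ x.f3 = y.f3 ∧ x.f4 = y.f4 ∧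
     BigGcd x.c6 x.f1 x.f2 x.f3 x.f4 ∣ x.t1 - y.t1 ∧
     x.c6 * (Int.gcd x.f3 x.f4 : ℤ) ∣
       (x.f1 * x.f2 + x.c6 * x.t2) - (y.f1 * y.f2 + x.c6 * y.t2)))

lemma good_refl (x : Tuple) : Good x x :=
  ⟨rfl, rfl, rfl, rfl, rfl, rfl, fun _ => ⟨by simp, by simp, rfl, rfl, by simp, by simp⟩⟩

lemma good_symm {x y : Tuple} (h : Good x y) : Good y x := by
  obtain ⟨e1, e2, e3, e4, e5, e6, himp⟩ := h
  refine ⟨e1.symm, e2.symm, e3.symm, e4.symm, e5.symm, e6.symm, ?_⟩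
  rintro ⟨g1, g2, g3, g4, g5⟩
  obtain ⟨d1, d2, d3, d4, d5, d6⟩ := himp
    ⟨e1.trans g1, e2.trans g2, e3.trans g3, e4.trans g4, e5.trans g5⟩
  have hg : BigGcd y.c6 y.f1 y.f2 y.f3 y.f4 = BigGcd x.c6 x.f1 x.f2 x.f3 x.f4 := by
    rw [← e6, ← d3, ← d4]
    exact (bigGcd_congr d1 d2).symm
  refine ⟨?_, ?_, d3.symm, d4.symm, ?_, ?_⟩
  · rw [← e6]; exact (dvd_sub_comm).mp d1
  · rw [← e6]; exact (dvd_sub_comm).mp d2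
  · rw [hg]; exact (dvd_sub_comm).mp d5
  · rw [← e6, ← d3, ← d4]; exact (dvd_sub_comm).mp d6

lemma good_trans {x y z : Tuple} (hxy : Good x y) (hyz : Good y z) : Good x z := by
  obtain ⟨e1, e2, e3, e4, e5, e6, himp⟩ := hxy
  obtain ⟨e1', e2', e3', e4', e5', e6', himp'⟩ := hyz
  refine ⟨e1.trans e1', e2.trans e2', e3.trans e3', e4.trans e4', e5.trans e5',
    e6.trans e6', ?_⟩
  rintro ⟨g1, g2, g3, g4, g5⟩
  obtain ⟨d1, d2, d3, d4, d5, d6⟩ := himp ⟨g1, g2, g3, g4, g5⟩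
  obtain ⟨d1', d2', d3', d4', d5', d6'⟩ := himp'
    ⟨e1 ▸ g1, e2 ▸ g2, e3 ▸ g3, e4 ▸ g4, e5 ▸ g5⟩
  rw [← e6] at d1' d2' d6'
  have hg : BigGcd y.c6 y.f1 y.f2 y.f3 y.f4 = BigGcd x.c6 x.f1 x.f2 x.f3 x.f4 := by
    rw [← e6, ← d3, ← d4]
    exact (bigGcd_congr d1 d2).symm
  rw [hg] at d5'
  refine ⟨?_, ?_, d3.trans d3', d4.trans d4', ?_, ?_⟩
  · have h := dvd_add d1 d1'; simpa using h
  · have h := dvd_add d2 d2'; simpa using h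
  · have h := dvd_add d5 d5'; simpa using h
  · rw [← d3, ← d4] at d6'
    have h := dvd_add d6 d6'; simpa using h

lemma good_rel {x y : Tuple} (h : ∃ g ∈ psiMoves, g x = y) : Good x y := by
  obtain ⟨g, hg, rfl⟩ := h
  simp only [psiMoves, List.mem_cons, List.not_mem_nil, or_false] at hg
  obtain ⟨c1, c2, c3, c4, c5, c6, f1, f2, f3, f4, t1, t2⟩ := x
  rcases hg with rfl | rfl | rfl | rfl | rfl | rfl | rfl | rfl <;>
      refine ⟨rfl, rfl, rfl, rfl, rfl, rfl, ?_⟩ <;>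
      rintro ⟨rfl, rfl, rfl, rfl, rfl⟩
  · -- psi21 : t1 += f1
    simp only [psi21, Equiv.coe_fn_mk]
    refine ⟨?_, ?_, ?_, ?_, ?_, ?_⟩
    · simp
    · simp
    · ring
    · ring
    · have e : t1 - (t1 + f1) = -f1 := by ring
      rw [e]; exact dvd_neg.mpr (bg_dvd_f1 _ _ _ _ _)
    · simp
  · -- psi41 : f2 += c6, t2 -= f1
    simp only [psi41, Equiv.coe_fn_mk]
    refine ⟨?_, ?_, ?_, ?_, ?_, ?_⟩
    · simp
    · exact ⟨-1, by ring⟩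
    · ring
    · trivial
    · simp
    · exact ⟨0, by ring⟩
  · -- psi12 : t1 += f2
    simp only [psi12, Equiv.coe_fn_mk]
    refine ⟨?_, ?_, ?_, ?_, ?_, ?_⟩
    · simp
    · simp
    · ring
    · ring
    · have e : t1 - (t1 + f2) = -f2 := by ring
      rw [e]; exact dvd_neg.mpr (bg_dvd_f2 _ _ _ _ _)
    · simp
  · -- psi32 : f1 += c6, t2 -= f2
    simp only [psi32, Equiv.coe_fn_mk]
    refine ⟨?_, ?_, ?_, ?_, ?_, ?_⟩
    · exact ⟨-1, by ring⟩
    · simp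
    · trivial
    · ring
    · simp
    · exact ⟨0, by ring⟩
  · -- psi43 : t1 += f3
    simp only [psi43, Equiv.coe_fn_mk]
    refine ⟨?_, ?_, ?_, ?_, ?_, ?_⟩
    · simp
    · simp
    · trivial
    · trivial
    · have e : t1 - (t1 + f3) = -f3 := by ring
      rw [e]; exact dvd_neg.mpr (bg_dvd_f3 _ _ _ _ _)
    · simp
  · -- psi23 : t2 -= f3
    simp only [psi23, Equiv.coe_fn_mk]
    refine ⟨?_, ?_, ?_, ?_, ?_, ?_⟩
    · simp
    · simp
    · trivial
    · ring
    · simp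
    · obtain ⟨k, hk⟩ := (Int.gcd_dvd_left f3 f4 : ((Int.gcd f3 f4 : ℤ)) ∣ f3)
      exact ⟨k, by linear_combination c6 * hk⟩
  · -- psi34 : t1 += f4
    simp only [psi34, Equiv.coe_fn_mk]
    refine ⟨?_, ?_, ?_, ?_, ?_, ?_⟩
    · simp
    · simp
    · trivial
    · trivial
    · have e : t1 - (t1 + f4) = -f4 := by ring
      rw [e]; exact dvd_neg.mpr (bg_dvd_f4 _ _ _ _ _)
    · simp
  · -- psi14 : t2 -= f4
    simp only [psi14, Equiv.coe_fn_mk]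
    refine ⟨?_, ?_, ?_, ?_, ?_, ?_⟩
    · simp
    · simp
    · ring
    · trivial
    · simp
    · obtain ⟨k, hk⟩ := (Int.gcd_dvd_right f3 f4 : ((Int.gcd f3 f4 : ℤ)) ∣ f4)
      exact ⟨k, by linear_combination c6 * hk⟩

lemma good_of_equiv {x y : Tuple} (h : PsiEquiv x y) : Good x y := by
  induction h with
  | rel a b hab => exact good_rel hab
  | refl a => exact good_refl a
  | symm a b _ ih => exact good_symm ih
  | trans a b c _ _ ih1 ih2 => exact good_trans ih1 ih2

end Aux

/-! ### Equivalence constructions -/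

def X (c6 f1 f2 f3 f4 t1 t2 : ℤ) : Tuple := ⟨0, 0, 0, 0, 0, c6, f1, f2, f3, f4, t1, t2⟩

lemma psiEquiv_refl (x : Tuple) : PsiEquiv x x := Relation.EqvGen.refl x
lemma psiEquiv_symm {x y : Tuple} (h : PsiEquiv x y) : PsiEquiv y x := Relation.EqvGen.symm _ _ h
lemma psiEquiv_trans {x y z : Tuple} (h1 : PsiEquiv x y) (h2 : PsiEquiv y z) : PsiEquiv x z :=
  Relation.EqvGen.trans _ _ _ h1 h2

lemma psiEquiv_step {g : Equiv.Perm Tuple} (hg : g ∈ psiMoves) (x : Tuple) : PsiEquiv x (g x) :=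
  Relation.EqvGen.rel _ _ ⟨g, hg, rfl⟩

lemma psiEquiv_iter {g : Equiv.Perm Tuple} (hg : g ∈ psiMoves) (F : ℤ → Tuple)
    (h : ∀ n : ℤ, g (F n) = F (n+1)) : ∀ n : ℤ, PsiEquiv (F 0) (F n) := by
  intro n
  induction n using Int.induction_on with
  | zero => exact psiEquiv_refl _
  | succ n ih => exact psiEquiv_trans ih (h n ▸ psiEquiv_step hg (F n))
  | pred n ih =>
      have h2 : PsiEquiv (F (-n - 1)) (F (-n)) := by
        have h3 := psiEquiv_step hg (F (-n-1))
        rw [h (-n-1)] at h3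
        have h4 : (-n - 1 + 1 : ℤ) = -n := by ring
        rwa [h4] at h3
      exact psiEquiv_trans ih (psiEquiv_symm h2)

lemma iterA (c6 f1 f2 f3 f4 t1 t2 : ℤ) (n : ℤ) :
    PsiEquiv (X c6 f1 f2 f3 f4 t1 t2) (X c6 (f1 + n*c6) f2 f3 f4 t1 (t2 - n*f2)) := by
  have h := psiEquiv_iter (g := psi32) (by simp [psiMoves])
    (fun n => X c6 (f1 + n*c6) f2 f3 f4 t1 (t2 - n*f2)) ?_ n
  · simpa using h
  · intro m
    simp only [X, psi32, Equiv.coe_fn_mk]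
    congr 1 <;> ring

lemma iterB (c6 f1 f2 f3 f4 t1 t2 : ℤ) (n : ℤ) :
    PsiEquiv (X c6 f1 f2 f3 f4 t1 t2) (X c6 f1 (f2 + n*c6) f3 f4 t1 (t2 - n*f1)) := by
  have h := psiEquiv_iter (g := psi41) (by simp [psiMoves])
    (fun n => X c6 f1 (f2 + n*c6) f3 f4 t1 (t2 - n*f1)) ?_ n
  · simpa using h
  · intro m
    simp only [X, psi41, Equiv.coe_fn_mk]
    congr 1 <;> ring

lemma iterC (c6 f1 f2 f3 f4 t1 t2 : ℤ) (n : ℤ) :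
    PsiEquiv (X c6 f1 f2 f3 f4 t1 t2) (X c6 f1 f2 f3 f4 t1 (t2 - n*f3)) := by
  have h := psiEquiv_iter (g := psi23) (by simp [psiMoves])
    (fun n => X c6 f1 f2 f3 f4 t1 (t2 - n*f3)) ?_ n
  · simpa using h
  · intro m
    simp only [X, psi23, Equiv.coe_fn_mk]
    congr 1 <;> ring

lemma iterD (c6 f1 f2 f3 f4 t1 t2 : ℤ) (n : ℤ) :
    PsiEquiv (X c6 f1 f2 f3 f4 t1 t2) (X c6 f1 f2 f3 f4 t1 (t2 - n*f4)) := by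
  have h := psiEquiv_iter (g := psi14) (by simp [psiMoves])
    (fun n => X c6 f1 f2 f3 f4 t1 (t2 - n*f4)) ?_ n
  · simpa using h
  · intro m
    simp only [X, psi14, Equiv.coe_fn_mk]
    congr 1 <;> ring

lemma iterE (c6 f1 f2 f3 f4 t1 t2 : ℤ) (n : ℤ) :
    PsiEquiv (X c6 f1 f2 f3 f4 t1 t2) (X c6 f1 f2 f3 f4 (t1 + n*f1) t2) := by
  have h := psiEquiv_iter (g := psi21) (by simp [psiMoves])
    (fun n => X c6 f1 f2 f3 f4 (t1 + n*f1) t2) ?_ n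
  · simpa using h
  · intro m
    simp only [X, psi21, Equiv.coe_fn_mk]
    congr 1 <;> ring

lemma iterF (c6 f1 f2 f3 f4 t1 t2 : ℤ) (n : ℤ) :
    PsiEquiv (X c6 f1 f2 f3 f4 t1 t2) (X c6 f1 f2 f3 f4 (t1 + n*f2) t2) := by
  have h := psiEquiv_iter (g := psi12) (by simp [psiMoves])
    (fun n => X c6 f1 f2 f3 f4 (t1 + n*f2) t2) ?_ n
  · simpa using h
  · intro m
    simp only [X, psi12, Equiv.coe_fn_mk]
    congr 1 <;> ring

lemma iterG (c6 f1 f2 f3 f4 t1 t2 : ℤ) (n : ℤ) :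
    PsiEquiv (X c6 f1 f2 f3 f4 t1 t2) (X c6 f1 f2 f3 f4 (t1 + n*f3) t2) := by
  have h := psiEquiv_iter (g := psi43) (by simp [psiMoves])
    (fun n => X c6 f1 f2 f3 f4 (t1 + n*f3) t2) ?_ n
  · simpa using h
  · intro m
    simp only [X, psi43, Equiv.coe_fn_mk]
    congr 1 <;> ring

lemma iterH (c6 f1 f2 f3 f4 t1 t2 : ℤ) (n : ℤ) :
    PsiEquiv (X c6 f1 f2 f3 f4 t1 t2) (X c6 f1 f2 f3 f4 (t1 + n*f4) t2) := by
  have h := psiEquiv_iter (g := psi34) (by simp [psiMoves])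
    (fun n => X c6 f1 f2 f3 f4 (t1 + n*f4) t2) ?_ n
  · simpa using h
  · intro m
    simp only [X, psi34, Equiv.coe_fn_mk]
    congr 1 <;> ring

lemma iterI (c6 f1 f2 f3 f4 t1 t2 : ℤ) (n : ℤ) :
    PsiEquiv (X c6 f1 f2 f3 f4 t1 t2) (X c6 f1 f2 f3 f4 (t1 + n*c6) t2) := by
  have h1 := iterA c6 f1 f2 f3 f4 t1 t2 1
  have h2 := iterE c6 (f1+1*c6) f2 f3 f4 t1 (t2-1*f2) n
  have h3 := iterA c6 (f1+1*c6) f2 f3 f4 (t1+n*(f1+1*c6)) (t2-1*f2) (-1)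
  have h4 := iterE c6 (f1+1*c6+(-1)*c6) f2 f3 f4 (t1+n*(f1+1*c6)) (t2-1*f2-(-1)*f2) (-n)
  have hXeq : X c6 (f1+1*c6+(-1)*c6) f2 f3 f4 (t1+n*(f1+1*c6)+(-n)*(f1+1*c6+(-1)*c6))
      (t2-1*f2-(-1)*f2) = X c6 f1 f2 f3 f4 (t1 + n*c6) t2 := by
    simp only [X]; congr 1 <;> ring
  rw [hXeq] at h4
  exact psiEquiv_trans h1 (psiEquiv_trans h2 (psiEquiv_trans h3 h4))

lemma adjust_t1 (c6 f1 f2 f3 f4 t1 t2 a b c d e : ℤ) :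
    PsiEquiv (X c6 f1 f2 f3 f4 t1 t2)
      (X c6 f1 f2 f3 f4 (t1 + a*c6 + b*f1 + c*f2 + d*f3 + e*f4) t2) := by
  refine psiEquiv_trans (iterI c6 f1 f2 f3 f4 t1 t2 a) ?_
  refine psiEquiv_trans (iterE c6 f1 f2 f3 f4 (t1 + a*c6) t2 b) ?_
  refine psiEquiv_trans (iterF c6 f1 f2 f3 f4 (t1 + a*c6 + b*f1) t2 c) ?_
  refine psiEquiv_trans (iterG c6 f1 f2 f3 f4 (t1 + a*c6 + b*f1 + c*f2) t2 d) ?_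
  exact iterH c6 f1 f2 f3 f4 (t1 + a*c6 + b*f1 + c*f2 + d*f3) t2 e

lemma adjust_t2 (c6 f1 f2 f3 f4 t1 t2 a b : ℤ) :
    PsiEquiv (X c6 f1 f2 f3 f4 t1 t2) (X c6 f1 f2 f3 f4 t1 (t2 - a*f3 - b*f4)) := by
  exact psiEquiv_trans (iterC c6 f1 f2 f3 f4 t1 t2 a)
    (iterD c6 f1 f2 f3 f4 t1 (t2 - a*f3) b)
/-- Classification when c₁ = ⋯ = c₅ = 0 and c₆ ≠ 0: two such tuples are ψ-equivalent
iff f₁ ≡ f₁′ (mod c₆), f₂ ≡ f₂′ (mod c₆), f₃ = f₃′, f₄ = f₄′,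
t₁ ≡ t₁′ (mod gcd(c₆,f₁,f₂,f₃,f₄)), and
f₁f₂+c₆t₂ ≡ f₁′f₂′+c₆t₂′ (mod c₆·gcd(f₃,f₄)) (congruence modulo 0 means equality). -/
theorem classification_c6_only (c6 f1 f2 f3 f4 t1 t2 f1' f2' f3' f4' t1' t2' : ℤ)
    (hc6 : c6 ≠ 0) :
    PsiEquiv ⟨0, 0, 0, 0, 0, c6, f1, f2, f3, f4, t1, t2⟩
        ⟨0, 0, 0, 0, 0, c6, f1', f2', f3', f4', t1', t2'⟩ ↔
      (c6 ∣ f1 - f1' ∧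
        c6 ∣ f2 - f2' ∧
        f3 = f3' ∧
        f4 = f4' ∧
        (Int.gcd c6 (Int.gcd f1 (Int.gcd f2 (Int.gcd f3 f4))) : ℤ) ∣ t1 - t1' ∧
        c6 * (Int.gcd f3 f4 : ℤ) ∣ (f1 * f2 + c6 * t2) - (f1' * f2' + c6 * t2')) := by
  constructor
  · intro h
    have hg := good_of_equiv h
    obtain ⟨-, -, -, -, -, -, himp⟩ := hg
    exact himp ⟨rfl, rfl, rfl, rfl, rfl⟩
  · rintro ⟨h1, h2, rfl, rfl, h5, h6⟩
    obtain ⟨m1, hm1⟩ := h1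
    obtain ⟨m2, hm2⟩ := h2
    have hA := iterA c6 f1 f2 f3 f4 t1 t2 (-m1)
    have ef1 : f1 + (-m1)*c6 = f1' := by linarith [hm1]
    rw [ef1] at hA
    have hB := iterB c6 f1' f2 f3 f4 t1 (t2 - (-m1)*f2) (-m2)
    have ef2 : f2 + (-m2)*c6 = f2' := by linarith [hm2]
    rw [ef2] at hB
    -- t2 adjustment
    have hg34 : (Int.gcd f3 f4 : ℤ) ∣ (t2 - (-m1)*f2 - (-m2)*f1') - t2' := by
      have key : (f1 * f2 + c6 * t2) - (f1' * f2' + c6 * t2')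
          = c6 * ((t2 - (-m1)*f2 - (-m2)*f1') - t2') := by
        linear_combination f2 * hm1 + f1' * hm2
      rw [key] at h6
      exact (mul_dvd_mul_iff_left hc6).mp h6
    obtain ⟨a, b, hab⟩ := gcd_combo f3 f4 _ hg34
    have hC := adjust_t2 c6 f1' f2' f3 f4 t1 (t2 - (-m1)*f2 - (-m2)*f1') a b
    have et2 : t2 - (-m1)*f2 - (-m2)*f1' - a*f3 - b*f4 = t2' := by linear_combination hab
    rw [et2] at hC
    -- t1 adjustment
    obtain ⟨p, q, r, s, u, hpq⟩ :
        ∃ p q r s u : ℤ, t1 - t1' = c6*p + f1*q + f2*r + f3*s + f4*u := by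
      obtain ⟨x1, y1, e1⟩ := gcd_combo c6 _ _ h5
      obtain ⟨x2, y2, e2⟩ := gcd_combo f1 ((Int.gcd f2 (Int.gcd f3 f4) : ℤ)) _
        (dvd_mul_right _ y1)
      obtain ⟨x3, y3, e3⟩ := gcd_combo f2 ((Int.gcd f3 f4 : ℤ)) _ (dvd_mul_right _ y2)
      obtain ⟨x4, y4, e4⟩ := gcd_combo f3 f4 _ (dvd_mul_right _ y3)
      exact ⟨x1, x2, x3, x4, y4, by linear_combination e1 + e2 + e3 + e4⟩
    have hD := adjust_t1 c6 f1' f2' f3 f4 t1 t2' (-(p + m1*q + m2*r)) (-q) (-r) (-s) (-u)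
    have et1 : t1 + (-(p + m1*q + m2*r))*c6 + (-q)*f1' + (-r)*f2' + (-s)*f3 + (-u)*f4 = t1' := by
      linear_combination hpq + q*hm1 + r*hm2
    rw [et1] at hD
    exact psiEquiv_trans hA (psiEquiv_trans hB (psiEquiv_trans hC hD))
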